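/- Let F be a finite field and K a finite extension field of F. Let s ≥ 1 and let t, d be integers with t < d ≤ 2t (so that 1 ≤ d − t ≤ t). Let α₁, …, α_t be distinct nonzero elements of K, and let H be the (d−t−1) × t matrix over K with entries H_{i,j} = α_j^{i−1} for 1 ≤ i ≤ d−t−1 and 1 ≤ j ≤ t (a parity-check matrix of the Reed–Solomon code of length t and minimum distance d−t with code locators α₁, …, α_t). Let E be an s × t matrix over F with no zero column. Then the following are equivalent: (i) there exists a nonzero vector e ∈ F^s such that at least d − t columns of E are F-scalar multiples of e; (ii) there exists a vector v ∈ K^t of Hamming weight exactly d − t such that H · diag(v) · Eᵀ = 0, where the entries of E are viewed in K via the inclusion F ⊆ K. -/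

import Mathlib

open Matrix Finset Polynomial

lemma basis_leadingCoeff {K : Type*} [Field K] {ι : Type*} [DecidableEq ι]
    {S : Finset ι} {v : ι → K} (hv : Set.InjOn v S) {j : ι} (hj : j ∈ S) :
    (Lagrange.basis S v j).leadingCoeff = ∏ j' ∈ S.erase j, (v j - v j')⁻¹ := by
  rw [Lagrange.basis, leadingCoeff_prod]
  refine Finset.prod_congr rfl fun j' hj' => ?_
  rw [Lagrange.basisDivisor, leadingCoeff_mul, leadingCoeff_C,
    (monic_X_sub_C (v j')).leadingCoeff, mul_one]

lemma lag_sum {K : Type*} [Field K] {ι : Type*} [DecidableEq ι] (S : Finset ι) (v : ι → K)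
    (hv : Set.InjOn v S) (k : ℕ) (hk : k + 1 < S.card) :
    ∑ j ∈ S, v j ^ k * ∏ j' ∈ S.erase j, (v j - v j')⁻¹ = 0 := by
  have hdeg : ((X : K[X]) ^ k).degree < S.card := by
    rw [degree_X_pow]
    exact_mod_cast Nat.lt_of_succ_lt hk
  have h := Lagrange.eq_interpolate (f := (X : K[X]) ^ k) hv hdeg
  have h2 := congrArg (fun p => Polynomial.coeff p (S.card - 1)) h
  simp only [Lagrange.interpolate_apply, Polynomial.finset_sum_coeff, coeff_C_mul,
    Function.comp_apply, eval_pow, eval_X, coeff_X_pow] at h2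
  rw [if_neg (by omega)] at h2
  refine Eq.trans (Finset.sum_congr rfl fun j hj => ?_) h2.symm
  congr 1
  have hnd : (Lagrange.basis S v j).natDegree = S.card - 1 := Lagrange.natDegree_basis hv hj
  rw [← hnd, Polynomial.coeff_natDegree, basis_leadingCoeff hv hj]

lemma van_zero {K : Type*} [Field K] {t : ℕ} (α : Fin t → K) (hinj : Function.Injective α)
    (c : Fin t → K) (S : Finset (Fin t)) (hsupp : ∀ j ∉ S, c j = 0)
    (hsum : ∀ k < S.card, ∑ j, c j * α j ^ k = 0) : c = 0 := by
  classical
  set n := S.card with hn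
  let e : S ≃ Fin n := S.equivFin
  let w : Fin n → K := fun j => α (e.symm j)
  let M : Matrix (Fin n) (Fin n) K := fun k j => w j ^ (k : ℕ)
  have hdet : M.det ≠ 0 := by
    have : M = (Matrix.vandermonde w)ᵀ := by
      ext k j; rfl
    rw [this, Matrix.det_transpose]
    rw [Matrix.det_vandermonde_ne_zero_iff]
    intro a b hab
    have : (e.symm a : Fin t) = (e.symm b : Fin t) := hinj hab
    have := Subtype.coe_injective this
    exact e.symm.injective this
  have hmv : M.mulVec (fun j => c (e.symm j)) = 0 := by
    funext k
    have hk : (k : ℕ) < S.card := k.isLt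
    have h1 : ∑ j : Fin n, c (e.symm j) * α (e.symm j) ^ (k : ℕ)
        = ∑ j : S, c j * α j ^ (k : ℕ) :=
      Equiv.sum_comp e.symm (fun j : {x // x ∈ S} => c j * α j ^ (k : ℕ))
    have h2 : ∑ j : S, c (j : Fin t) * α (j : Fin t) ^ (k : ℕ)
        = ∑ j ∈ S, c j * α j ^ (k : ℕ) :=
      Finset.sum_coe_sort S (fun j => c j * α j ^ (k : ℕ))
    have h3 : ∑ j ∈ S, c j * α j ^ (k : ℕ) = ∑ j, c j * α j ^ (k : ℕ) :=
      Finset.sum_subset (Finset.subset_univ S)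
        (fun j _ hj => by rw [hsupp j hj, zero_mul])
    simp only [Matrix.mulVec, dotProduct, Pi.zero_apply, M, w]
    calc ∑ j, α (e.symm j) ^ (k : ℕ) * c (e.symm j)
        = ∑ j : Fin n, c (e.symm j) * α (e.symm j) ^ (k : ℕ) := by
          exact Finset.sum_congr rfl fun j _ => mul_comm _ _
      _ = 0 := by rw [h1, h2, h3]; exact hsum _ hk
  have hx : (fun j => c (e.symm j)) = 0 := Matrix.eq_zero_of_mulVec_eq_zero hdet hmv
  funext j
  by_cases hj : j ∈ S
  · have := congrFun hx (e ⟨j, hj⟩)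
    simpa using this
  · exact hsupp j hj

/-- For an `s × t` matrix `E` over `F ⊆ K` with no zero column, and `H`
the Vandermonde-type parity-check matrix of the Reed–Solomon code with distinct nonzero
code locators `α₁, …, α_t ∈ K` and minimum distance `d − t`, the following are
equivalent: (i) some nonzero `e ∈ F^s` is such that at least `d − t` columns of `E` are
`F`-scalar multiples of `e`; (ii) some `v ∈ K^t` of Hamming weight exactly `d − t`
satisfies `H · diag(v) · Eᵀ = 0`. -/
theorem stmt_19 (F K : Type*) [Field F] [Field K] [Algebra F K]
    [Fintype F] [Fintype K] [DecidableEq K]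
    (s t d : ℕ) (hs : 1 ≤ s) (htd : t < d) (hd2 : d ≤ 2 * t)
    (α : Fin t → K) (hinj : Function.Injective α) (hne : ∀ j, α j ≠ 0)
    (E : Matrix (Fin s) (Fin t) F) (hE : ∀ j, ∃ i, E i j ≠ 0) :
    (∃ e : Fin s → F, e ≠ 0 ∧
        d - t ≤ Nat.card {j : Fin t // ∃ l : F, ∀ i, E i j = l * e i}) ↔
      ∃ v : Fin t → K, hammingNorm v = d - t ∧
        (Matrix.of fun (i : Fin (d - t - 1)) (j : Fin t) => α j ^ (i : ℕ)) *
            Matrix.diagonal v *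
            (Matrix.of fun (i : Fin s) (j : Fin t) => algebraMap F K (E i j))ᵀ = 0 := by
  classical
  have halg : Function.Injective (algebraMap F K) := (algebraMap F K).injective
  set m := d - t with hm
  have hm1 : 1 ≤ m := by omega
  have hmt : m ≤ t := by omega
  constructor
  · rintro ⟨e, he, hcard⟩
    -- extract a finset T of columns that are multiples of e
    set P : Fin t → Prop := fun j => ∃ l : F, ∀ i, E i j = l * e i with hP
    have hT : m ≤ (Finset.univ.filter P).card := by
      rwa [Nat.card_eq_fintype_card, Fintype.card_subtype] at hcard
    obtain ⟨S, hST, hScard⟩ := Finset.exists_subset_card_eq hT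
    set l : Fin t → F := fun j => if h : P j then h.choose else 0 with hl
    have hlspec : ∀ j ∈ S, ∀ i, E i j = l j * e i := by
      intro j hj i
      have hPj : P j := (Finset.mem_filter.mp (hST hj)).2
      simp only [hl, dif_pos hPj]
      exact hPj.choose_spec i
    have hlne : ∀ j ∈ S, l j ≠ 0 := by
      intro j hj h0
      obtain ⟨i, hi⟩ := hE j
      exact hi (by rw [hlspec j hj i, h0, zero_mul])
    set w : Fin t → K := fun j => ∏ j' ∈ S.erase j, (α j - α j')⁻¹ with hwdef
    have hwne : ∀ j ∈ S, w j ≠ 0 := by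
      intro j hj
      refine Finset.prod_ne_zero_iff.mpr fun j' hj' => ?_
      refine inv_ne_zero (sub_ne_zero_of_ne fun h => ?_)
      exact (Finset.mem_erase.mp hj').1 (hinj h).symm
    set v : Fin t → K := fun j => if j ∈ S then (algebraMap F K (l j))⁻¹ * w j else 0 with hv
    have hvne : ∀ j, v j ≠ 0 ↔ j ∈ S := by
      intro j
      constructor
      · intro h
        by_contra hj
        exact h (by simp [hv, hj])
      · intro hj
        simp only [hv, if_pos hj]
        exact mul_ne_zero (inv_ne_zero (fun h => hlne j hj (halg (by simpa using h))))
          (hwne j hj)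
    refine ⟨v, ?_, ?_⟩
    · rw [← hScard]
      unfold hammingNorm
      congr 1
      ext j
      simp [hvne j]
    · ext i' i
      have hentry : ((Matrix.of fun (i'' : Fin (d - t - 1)) (j : Fin t) => α j ^ (i'' : ℕ)) *
            Matrix.diagonal v *
            (Matrix.of fun (i'' : Fin s) (j : Fin t) => algebraMap F K (E i'' j))ᵀ) i' i
          = ∑ j, α j ^ (i' : ℕ) * v j * algebraMap F K (E i j) := by
        rw [Matrix.mul_apply]
        refine Finset.sum_congr rfl fun j _ => ?_
        rw [Matrix.mul_diagonal, Matrix.transpose_apply]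
        rfl
      rw [hentry, Matrix.zero_apply]
      have hsub : ∑ j, α j ^ (i' : ℕ) * v j * algebraMap F K (E i j)
          = ∑ j ∈ S, α j ^ (i' : ℕ) * v j * algebraMap F K (E i j) :=
        (Finset.sum_subset (Finset.subset_univ S)
          (fun j _ hj => by simp [hv, hj])).symm
      rw [hsub]
      have hterm : ∀ j ∈ S, α j ^ (i' : ℕ) * v j * algebraMap F K (E i j)
          = algebraMap F K (e i) * (α j ^ (i' : ℕ) * w j) := by
        intro j hj
        have hEij : algebraMap F K (E i j) = algebraMap F K (l j) * algebraMap F K (e i) := by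
          rw [← _root_.map_mul]; exact congrArg _ (hlspec j hj i)
        have hlj : algebraMap F K (l j) ≠ 0 := fun h => hlne j hj (halg (by simpa using h))
        rw [hv]
        simp only [if_pos hj]
        rw [hEij]
        field_simp
      rw [Finset.sum_congr rfl hterm, ← Finset.mul_sum]
      have hcast : (i' : ℕ) + 1 < S.card := by
        have := i'.isLt
        omega
      rw [lag_sum S α (hinj.injOn) (i' : ℕ) hcast, mul_zero]
  · rintro ⟨v, hwt, hM⟩
    set S : Finset (Fin t) := Finset.univ.filter (fun j => v j ≠ 0) with hS
    have hScard : S.card = m := by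
      rw [← hwt]
      unfold hammingNorm
      congr 1
    have hSne : S.Nonempty := Finset.card_pos.mp (by omega)
    obtain ⟨j₀, hj₀⟩ := hSne
    obtain ⟨i₀, hi₀⟩ := hE j₀
    have hvS : ∀ j, j ∈ S ↔ v j ≠ 0 := fun j => by simp [hS]
    -- rows of the parity-check equation
    have hrow : ∀ k : ℕ, k < m - 1 → ∀ i : Fin s,
        ∑ j, (v j * algebraMap F K (E i j)) * α j ^ k = 0 := by
      intro k hk i
      have hk' : k < d - t - 1 := by omega
      have h0 := congrFun (congrFun hM ⟨k, hk'⟩) i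
      have hentry : ((Matrix.of fun (i'' : Fin (d - t - 1)) (j : Fin t) => α j ^ (i'' : ℕ)) *
            Matrix.diagonal v *
            (Matrix.of fun (i'' : Fin s) (j : Fin t) => algebraMap F K (E i'' j))ᵀ)
              (⟨k, hk'⟩ : Fin (d - t - 1)) i
          = ∑ j, α j ^ k * v j * algebraMap F K (E i j) := by
        rw [Matrix.mul_apply]
        refine Finset.sum_congr rfl fun j _ => ?_
        rw [Matrix.mul_diagonal, Matrix.transpose_apply]
        rfl
      rw [hentry, Matrix.zero_apply] at h0
      rw [← h0]
      exact Finset.sum_congr rfl fun j _ => by ring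
    -- rank-one structure
    have hprop : ∀ i : Fin s, ∀ j ∈ S,
        algebraMap F K (E i₀ j₀) * algebraMap F K (E i j)
          = algebraMap F K (E i j₀) * algebraMap F K (E i₀ j) := by
      intro i j hj
      set z : Fin t → K := fun j =>
        algebraMap F K (E i₀ j₀) * (v j * algebraMap F K (E i j))
          - algebraMap F K (E i j₀) * (v j * algebraMap F K (E i₀ j)) with hz
      have hzsupp : ∀ j', j' ∉ S.erase j₀ → z j' = 0 := by
        intro j' hj'
        by_cases hj'' : j' = j₀
        · subst hj''
          simp only [hz]
          ring
        · have hnot : j' ∉ S := fun hmem => hj' (Finset.mem_erase.mpr ⟨hj'', hmem⟩)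
          have hv0 : v j' = 0 := by
            by_contra h0
            exact hnot ((hvS j').mpr h0)
          simp [hz, hv0]
      have hzsum : ∀ k < (S.erase j₀).card, ∑ j', z j' * α j' ^ k = 0 := by
        intro k hk
        have hcard' : (S.erase j₀).card = m - 1 := by
          rw [Finset.card_erase_of_mem hj₀, hScard]
        rw [hcard'] at hk
        have h1 := hrow k hk i
        have h2 := hrow k hk i₀
        simp only [hz]
        calc ∑ j', (algebraMap F K (E i₀ j₀) * (v j' * algebraMap F K (E i j'))
              - algebraMap F K (E i j₀) * (v j' * algebraMap F K (E i₀ j'))) * α j' ^ k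
            = algebraMap F K (E i₀ j₀) * ∑ j', (v j' * algebraMap F K (E i j')) * α j' ^ k
              - algebraMap F K (E i j₀) * ∑ j', (v j' * algebraMap F K (E i₀ j')) * α j' ^ k := by
              rw [Finset.mul_sum, Finset.mul_sum, ← Finset.sum_sub_distrib]
              exact Finset.sum_congr rfl fun j' _ => by ring
          _ = 0 := by rw [h1, h2]; ring
      have hz0 : z = 0 := van_zero α hinj z (S.erase j₀) hzsupp hzsum
      have hzj := congrFun hz0 j
      simp only [hz, Pi.zero_apply, sub_eq_zero] at hzj
      have hvj : v j ≠ 0 := (hvS j).mp hj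
      apply mul_left_cancel₀ hvj
      calc v j * (algebraMap F K (E i₀ j₀) * algebraMap F K (E i j))
            = algebraMap F K (E i₀ j₀) * (v j * algebraMap F K (E i j)) := by ring
          _ = algebraMap F K (E i j₀) * (v j * algebraMap F K (E i₀ j)) := hzj
          _ = v j * (algebraMap F K (E i j₀) * algebraMap F K (E i₀ j)) := by ring
    refine ⟨fun i => E i j₀, ?_, ?_⟩
    · intro h
      exact hi₀ (congrFun h i₀)
    · set P : Fin t → Prop := fun j => ∃ l : F, ∀ i, E i j = l * E i j₀ with hP
      have hSP : ∀ j ∈ S, P j := by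
        intro j hj
        refine ⟨E i₀ j / E i₀ j₀, fun i => ?_⟩
        have hF : E i₀ j₀ * E i j = E i j₀ * E i₀ j := by
          apply halg
          rw [_root_.map_mul, _root_.map_mul]
          exact hprop i j hj
        field_simp
        calc E i j * E i₀ j₀ = E i₀ j₀ * E i j := mul_comm _ _
          _ = E i j₀ * E i₀ j := hF
          _ = E i₀ j * E i j₀ := by ring
      rw [Nat.card_eq_fintype_card, Fintype.card_subtype]
      calc m = S.card := hScard.symm
        _ ≤ (Finset.univ.filter P).card := by
            apply Finset.card_le_card
            intro j hj
            exact Finset.mem_filter.mpr ⟨Finset.mem_univ j, hSP j hj⟩
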